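/- Let d be a function on Λ-modules satisfying (d2). Given an exact sequence 0 → K → L^0 → L^1 → ⋯ → L^i → N → 0 of Λ-modules such that d(N) + i − j < d(L^j) for all 0 ≤ j ≤ i, one has d(K) = d(N) + i + 1. -/

import Mathlib

universe u

/-- A `d`-function: assigns to every `Λ`-module a value in `ℕ ∪ {∞}`. -/
abbrev DFun (Λ : Type u) [Ring Λ] :=
  (N : Type u) → [AddCommGroup N] → [Module Λ N] → ℕ∞

/-- Condition (d2): if `d L > d N` then `d K = d N + 1`. -/
def CondD2 (Λ : Type u) [Ring Λ] (d : DFun Λ) : Prop :=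
  ∀ (K L N : Type u) [AddCommGroup K] [Module Λ K] [AddCommGroup L] [Module Λ L]
    [AddCommGroup N] [Module Λ N] (f : K →ₗ[Λ] L) (g : L →ₗ[Λ] N),
    Function.Injective f → Function.Surjective g →
    LinearMap.range f = LinearMap.ker g →
    d N < d L → d K = d N + 1

theorem aux5 (Λ : Type u) [Ring Λ] (d : DFun Λ) (hd : CondD2 Λ d) :
    ∀ (i : ℕ) (Lc : ℕ → Type u) [∀ j, AddCommGroup (Lc j)] [∀ j, Module Λ (Lc j)]
      (N : Type u) [AddCommGroup N] [Module Λ N]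
      (g : ∀ j, Lc j →ₗ[Λ] Lc (j + 1)) (gN : Lc (i + 1) →ₗ[Λ] N),
      Function.Injective (g 0) → Function.Surjective gN →
      (∀ j, j + 1 ≤ i → Function.Exact (g j) (g (j + 1))) →
      Function.Exact (g i) gN →
      (∀ j, j ≤ i → d N + i < d (Lc (j + 1)) + j) →
      d (Lc 0) = d N + i + 1 := by
  intro i
  induction i with
  | zero =>
    intro Lc _ _ N _ _ g gN hinj hsurj _ hexN hdl
    have h := hd (Lc 0) (Lc 1) N (g 0) gN hinj hsurj
      (by rw [LinearMap.exact_iff] at hexN; exact hexN.symm)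
      (by simpa using hdl 0 le_rfl)
    simpa using h
  | succ i ih =>
    intro Lc _ _ N _ _ g gN hinj hsurj hex hexN hdl
    set M := LinearMap.ker gN with hM
    have hrange : LinearMap.range (g (i + 1)) = M := by
      rw [LinearMap.exact_iff] at hexN; exact hexN.symm
    have hdM : d M = d N + 1 := by
      apply hd M (Lc (i + 2)) N M.subtype gN Subtype.coe_injective hsurj
        (Submodule.range_subtype M)
      have h := hdl (i + 1) le_rfl
      by_contra hc
      exact absurd h (not_lt.2 (add_le_add (not_lt.1 hc) le_rfl))
    have hmem : ∀ x, g (i + 1) x ∈ M := fun x => hrange ▸ LinearMap.mem_range_self _ x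
    set gN' : Lc (i + 1) →ₗ[Λ] M := LinearMap.codRestrict M (g (i + 1)) hmem with hgN'
    have hsurj' : Function.Surjective gN' := by
      rintro ⟨y, hy⟩
      rw [← hrange] at hy
      obtain ⟨x, hx⟩ := hy
      exact ⟨x, Subtype.ext hx⟩
    have hexN' : Function.Exact (g i) gN' := by
      rw [LinearMap.exact_iff]
      rw [hgN', LinearMap.ker_codRestrict]
      have := hex i le_rfl
      rw [LinearMap.exact_iff] at this
      exact this
    have hdl' : ∀ j, j ≤ i → d M + i < d (Lc (j + 1)) + j := by
      intro j hj
      have h := hdl j (by omega)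
      have : d M + (i : ℕ∞) = d N + ((i : ℕ) + 1 : ℕ) := by
        rw [hdM]; push_cast; ring
      rw [this]
      exact h
    have := ih Lc M g gN' hinj hsurj' (fun j hj => hex j (by omega)) hexN' hdl'
    rw [this, hdM]
    push_cast
    ring

/-- Proposition 2.1(2).  The exact sequence `0 → K → L^0 → ⋯ → L^i → N → 0`
is encoded as a chain `Lc` with `K = Lc 0`, `L^j = Lc (j+1)` for `0 ≤ j ≤ i`
and `N = Lc (i+2)`; the inequality `d N + i - j < d (L^j)` is written
`d N + i < d (L^j) + j` to avoid negative numbers. -/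
theorem stmt5 (Λ : Type u) [Ring Λ] (d : DFun Λ) (hd : CondD2 Λ d)
    (i : ℕ) (Lc : ℕ → Type u) [∀ j, AddCommGroup (Lc j)] [∀ j, Module Λ (Lc j)]
    (g : ∀ j, Lc j →ₗ[Λ] Lc (j + 1))
    (hinj : Function.Injective (g 0))
    (hsurj : Function.Surjective (g (i + 1)))
    (hex : ∀ j, j ≤ i → Function.Exact (g j) (g (j + 1)))
    (hdl : ∀ j, j ≤ i → d (Lc (i + 2)) + i < d (Lc (j + 1)) + j) :
    d (Lc 0) = d (Lc (i + 2)) + i + 1 :=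
  aux5 Λ d hd i Lc (Lc (i + 2)) g (g (i + 1)) hinj hsurj
    (fun j hj => hex j (by omega)) (hex i le_rfl) hdl
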